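/- arXiv:2509.19601 — 3 statements merged into one kernel-verified Lean document; each statement's English description precedes it below -/
import Mathlib

section
/- Let A₂, Â₂ > 0, θ₁, θ̂₁, θ₂, θ̂₂ > 0, and let f₁ : [0,1] → ℝ be continuous, non-constant, and nonnegative. Suppose for all u₁ ∈ [0,1]: θ₁·f₁(u₁)/(1+f₁(u₁)+A₂) = θ̂₁·f̂₁(u₁)/(1+f̂₁(u₁)+Â₂) and θ₂·A₂/(1+f₁(u₁)+A₂) = θ̂₂·Â₂/(1+f̂₁(u₁)+Â₂), where f̂₁ : [0,1] → ℝ is nonnegative continuous. Then θ₁ = θ̂₁. -/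
theorem stmt_7 (A₂ Ahat₂ θ₁ θhat₁ θ₂ θhat₂ : ℝ)
    (hA₂ : 0 < A₂) (hAhat₂ : 0 < Ahat₂)
    (hθ₁ : 0 < θ₁) (hθhat₁ : 0 < θhat₁) (hθ₂ : 0 < θ₂) (hθhat₂ : 0 < θhat₂)
    (f₁ fhat₁ : ℝ → ℝ)
    (hf₁ : ContinuousOn f₁ (Set.Icc 0 1))
    (hnc : ¬ ∃ c, ∀ u ∈ Set.Icc (0:ℝ) 1, f₁ u = c)
    (hf₁pos : ∀ u ∈ Set.Icc (0:ℝ) 1, 0 ≤ f₁ u)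
    (hfhat₁ : ContinuousOn fhat₁ (Set.Icc 0 1))
    (hfhat₁pos : ∀ u ∈ Set.Icc (0:ℝ) 1, 0 ≤ fhat₁ u)
    (h1 : ∀ u₁ ∈ Set.Icc (0:ℝ) 1,
      θ₁ * f₁ u₁ / (1 + f₁ u₁ + A₂) = θhat₁ * fhat₁ u₁ / (1 + fhat₁ u₁ + Ahat₂))
    (h2 : ∀ u₁ ∈ Set.Icc (0:ℝ) 1,
      θ₂ * A₂ / (1 + f₁ u₁ + A₂) = θhat₂ * Ahat₂ / (1 + fhat₁ u₁ + Ahat₂)) :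
    θ₁ = θhat₁ := by
  by_contra hne
  apply hnc
  refine ⟨(θhat₁*(θhat₂*Ahat₂)*(1+A₂) - θhat₁*(θ₂*A₂)*(1+Ahat₂)) /
      (θhat₂*Ahat₂*(θ₁-θhat₁)), fun u hu => ?_⟩
  have hD : (0:ℝ) < 1 + f₁ u + A₂ := by have := hf₁pos u hu; linarith
  have hDh : (0:ℝ) < 1 + fhat₁ u + Ahat₂ := by have := hfhat₁pos u hu; linarith
  have eq1 : θ₁ * f₁ u * (1 + fhat₁ u + Ahat₂) = θhat₁ * fhat₁ u * (1 + f₁ u + A₂) :=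
    (div_eq_div_iff (ne_of_gt hD) (ne_of_gt hDh)).mp (h1 u hu)
  have eq2 : θ₂ * A₂ * (1 + fhat₁ u + Ahat₂) = θhat₂ * Ahat₂ * (1 + f₁ u + A₂) :=
    (div_eq_div_iff (ne_of_gt hD) (ne_of_gt hDh)).mp (h2 u hu)
  have key : θ₁ * f₁ u * (θhat₂*Ahat₂) =
      θhat₁ * (θhat₂*Ahat₂*(1 + f₁ u + A₂) - θ₂*A₂*(1+Ahat₂)) := by
    have hmul : (θ₁ * f₁ u * (θhat₂*Ahat₂) -
        θhat₁ * (θhat₂*Ahat₂*(1 + f₁ u + A₂) - θ₂*A₂*(1+Ahat₂))) * (1 + f₁ u + A₂) = 0 := by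
      linear_combination (θ₂*A₂) * eq1 + (θhat₁*(1 + f₁ u + A₂) - θ₁*f₁ u) * eq2
    have := mul_eq_zero.mp hmul
    rcases this with h | h
    · linarith
    · exact absurd h (ne_of_gt hD)
  have hden : θhat₂*Ahat₂*(θ₁-θhat₁) ≠ 0 := by
    have : θ₁ - θhat₁ ≠ 0 := sub_ne_zero.mpr hne
    positivity
  rw [eq_div_iff hden]
  linear_combination key
end

section
/- Fix positive reals with f₁(u₁¹) ≠ f₁(u₁²), f₂(u₂¹) ≠ f₂(u₂²), θ₁ ≠ 0, θ₂ ≠ 0, f₁(1) ≠ 0, f₂(1) ≠ 0. The map ℱ : (f₁(u₁¹), f₁(u₁²), f₁(1), f₂(u₂¹), f₂(u₂²), f₂(1), θ₁, θ₂) ↦ (G₁₁¹, G₂₁¹, G₁₂¹, G₂₂¹, G₁₁², G₂₁², G₁₂², G₂₂²) is injective, where G₁₁ʲ = θ₁f₁(u₁ʲ)/(1+f₁(u₁ʲ)+f₂(1)), G₂₁ʲ = θ₂f₂(1)/(1+f₁(u₁ʲ)+f₂(1)), G₁₂ᵏ = θ₁f₁(1)/(1+f₁(1)+f₂(u₂ᵏ)),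 G₂₂ᵏ = θ₂f₂(u₂ᵏ)/(1+f₁(1)+f₂(u₂ᵏ)). -/
/-- The output tuple of Lemma 1:
`(G₁₁¹, G₂₁¹, G₁₂¹, G₂₂¹, G₁₁², G₂₁², G₁₂², G₂₂²)` as a function of
`x = (a₁, a₂, a₃, b₁, b₂, b₃, θ₁, θ₂)` where `aⱼ = f₁(u₁ʲ)`, `a₃ = f₁(1)`,
`bₖ = f₂(u₂ᵏ)`, `b₃ = f₂(1)`. -/
noncomputable def lemma1Map (x : Fin 8 → ℝ) : Fin 8 → ℝ :=
  ![x 6 * x 0 / (1 + x 0 + x 5),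
    x 7 * x 5 / (1 + x 0 + x 5),
    x 6 * x 2 / (1 + x 2 + x 3),
    x 7 * x 3 / (1 + x 2 + x 3),
    x 6 * x 1 / (1 + x 1 + x 5),
    x 7 * x 5 / (1 + x 1 + x 5),
    x 6 * x 2 / (1 + x 2 + x 4),
    x 7 * x 4 / (1 + x 2 + x 4)]

noncomputable def T1 (y : Fin 8 → ℝ) : ℝ := (y 1 * y 4 - y 0 * y 5) / (y 1 - y 5)
noncomputable def T2 (y : Fin 8 → ℝ) : ℝ := (y 2 * y 7 - y 3 * y 6) / (y 2 - y 6)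
noncomputable def S1 (y : Fin 8 → ℝ) : ℝ := 1 - y 0 / T1 y - y 1 / T2 y
noncomputable def S2 (y : Fin 8 → ℝ) : ℝ := 1 - y 4 / T1 y - y 5 / T2 y
noncomputable def S3 (y : Fin 8 → ℝ) : ℝ := 1 - y 2 / T1 y - y 3 / T2 y
noncomputable def S4 (y : Fin 8 → ℝ) : ℝ := 1 - y 6 / T1 y - y 7 / T2 y

noncomputable def recov (y : Fin 8 → ℝ) : Fin 8 → ℝ :=
  ![y 0 / T1 y / S1 y,
    y 4 / T1 y / S2 y,
    y 2 / T1 y / S3 y,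
    y 3 / T2 y / S3 y,
    y 7 / T2 y / S4 y,
    y 1 / T2 y / S1 y,
    T1 y,
    T2 y]

theorem key (x : Fin 8 → ℝ) (hp : ∀ i, 0 < x i) (hab : x 0 ≠ x 1) (hde : x 3 ≠ x 4) :
    recov (lemma1Map x) = x := by
  have h0 := hp 0; have h1 := hp 1; have h2 := hp 2; have h3 := hp 3
  have h4 := hp 4; have h5 := hp 5; have h6 := hp 6; have h7 := hp 7
  have hD1 : (0:ℝ) < 1 + x 0 + x 5 := by linarith
  have hD2 : (0:ℝ) < 1 + x 1 + x 5 := by linarith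
  have hD3 : (0:ℝ) < 1 + x 2 + x 3 := by linarith
  have hD4 : (0:ℝ) < 1 + x 2 + x 4 := by linarith
  have hy0 : lemma1Map x 0 = x 6 * x 0 / (1 + x 0 + x 5) := rfl
  have hy1 : lemma1Map x 1 = x 7 * x 5 / (1 + x 0 + x 5) := rfl
  have hy2 : lemma1Map x 2 = x 6 * x 2 / (1 + x 2 + x 3) := rfl
  have hy3 : lemma1Map x 3 = x 7 * x 3 / (1 + x 2 + x 3) := rfl
  have hy4 : lemma1Map x 4 = x 6 * x 1 / (1 + x 1 + x 5) := rfl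
  have hy5 : lemma1Map x 5 = x 7 * x 5 / (1 + x 1 + x 5) := rfl
  have hy6 : lemma1Map x 6 = x 6 * x 2 / (1 + x 2 + x 4) := rfl
  have hy7 : lemma1Map x 7 = x 7 * x 4 / (1 + x 2 + x 4) := rfl
  have hne15 : lemma1Map x 1 - lemma1Map x 5 ≠ 0 := by
    rw [hy1, hy5]
    have heq : x 7 * x 5 / (1 + x 0 + x 5) - x 7 * x 5 / (1 + x 1 + x 5)
        = x 7 * x 5 * (x 1 - x 0) / ((1 + x 0 + x 5) * (1 + x 1 + x 5)) := by
      field_simp; ring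
    rw [heq]
    exact div_ne_zero (mul_ne_zero (mul_ne_zero h7.ne' h5.ne')
      (sub_ne_zero.mpr (Ne.symm hab))) (mul_ne_zero hD1.ne' hD2.ne')
  have hne26 : lemma1Map x 2 - lemma1Map x 6 ≠ 0 := by
    rw [hy2, hy6]
    have heq : x 6 * x 2 / (1 + x 2 + x 3) - x 6 * x 2 / (1 + x 2 + x 4)
        = x 6 * x 2 * (x 4 - x 3) / ((1 + x 2 + x 3) * (1 + x 2 + x 4)) := by
      field_simp; ring
    rw [heq]
    exact div_ne_zero (mul_ne_zero (mul_ne_zero h6.ne' h2.ne')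
      (sub_ne_zero.mpr (Ne.symm hde))) (mul_ne_zero hD3.ne' hD4.ne')
  have hT1 : T1 (lemma1Map x) = x 6 := by
    rw [T1, div_eq_iff hne15, hy0, hy1, hy4, hy5]
    field_simp
    ring
  have hT2 : T2 (lemma1Map x) = x 7 := by
    rw [T2, div_eq_iff hne26, hy2, hy3, hy6, hy7]
    field_simp
    ring
  have hS1 : S1 (lemma1Map x) = 1 / (1 + x 0 + x 5) := by
    rw [S1, hT1, hT2, hy0, hy1]
    field_simp
    ring
  have hS2 : S2 (lemma1Map x) = 1 / (1 + x 1 + x 5) := by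
    rw [S2, hT1, hT2, hy4, hy5]
    field_simp
    ring
  have hS3 : S3 (lemma1Map x) = 1 / (1 + x 2 + x 3) := by
    rw [S3, hT1, hT2, hy2, hy3]
    field_simp
    ring
  have hS4 : S4 (lemma1Map x) = 1 / (1 + x 2 + x 4) := by
    rw [S4, hT1, hT2, hy6, hy7]
    field_simp
    ring
  funext i
  fin_cases i <;>
    simp only [recov, Matrix.cons_val_zero, Matrix.cons_val_one, Matrix.head_cons,
      Matrix.cons_val_two, Matrix.cons_val_three, Matrix.cons_val_four, Matrix.tail_cons,
      Matrix.cons_val_fin_one, Fin.isValue, Fin.reduceFinMk, Matrix.cons_val]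
  · rw [hy0, hT1, hS1]; show _ = x 0; field_simp
  · rw [hy4, hT1, hS2]; show _ = x 1; field_simp
  · rw [hy2, hT1, hS3]; show _ = x 2; field_simp
  · rw [hy3, hT2, hS3]; show _ = x 3; field_simp
  · rw [hy7, hT2, hS4]; show _ = x 4; field_simp
  · rw [hy1, hT2, hS1]; show _ = x 5; field_simp
  · exact hT1
  · exact hT2

theorem stmt_9 :
    Set.InjOn lemma1Map
      {x : Fin 8 → ℝ | (∀ i, 0 < x i) ∧ x 0 ≠ x 1 ∧ x 3 ≠ x 4} := by
  intro x hx x' hx' h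
  obtain ⟨hp, hab, hde⟩ := hx
  obtain ⟨hp', hab', hde'⟩ := hx'
  calc x = recov (lemma1Map x) := (key x hp hab hde).symm
    _ = recov (lemma1Map x') := by rw [h]
    _ = x' := key x' hp' hab' hde'
end

section
/- With the notation of Lemma 1 and assuming all denominators nonzero, the parameter θ₁ is recovered explicitly from the outputs by θ₁ = (G₁₁¹/G₂₁¹ − G₁₁²/G₂₁²) / (1/G₂₁¹ − 1/G₂₁²), provided G₂₁¹ ≠ G₂₁². -/
theorem stmt_10 (a₁ a₂ b θ₁ θ₂ : ℝ)
    (ha₁ : 0 ≤ a₁) (ha₂ : 0 ≤ a₂) (hne : a₁ ≠ a₂)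
    (hb : 0 < b) (hθ₁ : θ₁ ≠ 0) (hθ₂ : θ₂ ≠ 0)
    (G₁₁ G₂₁ : Fin 2 → ℝ)
    (hG₁₁1 : G₁₁ 0 = θ₁ * a₁ / (1 + a₁ + b)) (hG₁₁2 : G₁₁ 1 = θ₁ * a₂ / (1 + a₂ + b))
    (hG₂₁1 : G₂₁ 0 = θ₂ * b / (1 + a₁ + b)) (hG₂₁2 : G₂₁ 1 = θ₂ * b / (1 + a₂ + b))
    (hGne : G₂₁ 0 ≠ G₂₁ 1) :
    θ₁ = (G₁₁ 0 / G₂₁ 0 - G₁₁ 1 / G₂₁ 1) / (1 / G₂₁ 0 - 1 / G₂₁ 1) := by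
  have h1 : (0:ℝ) < 1 + a₁ + b := by linarith
  have h2 : (0:ℝ) < 1 + a₂ + b := by linarith
  have hbne : b ≠ 0 := ne_of_gt hb
  rw [hG₁₁1, hG₁₁2, hG₂₁1, hG₂₁2]
  have hsub : a₁ - a₂ ≠ 0 := sub_ne_zero.mpr hne
  field_simp
  ring_nf
  rw [← sub_mul, mul_inv_cancel₀ hsub]
end
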